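/- Let (Δ̄_k)_{k≥1} be mutually independent square-integrable random variables, let g : {1,2,...} → (0,1] and let L be a positive-integer-valued random variable, independent of the sequence (Δ̄_k), with P(L ≥ k) = g(k) for all k ≥ 1. Assume Σ_{k=1}^∞ E[Δ̄_k²]/g(k) < ∞ and Σ_{1≤j<k} |E[Δ̄_j]| |E[Δ̄_k]| / g(j) < ∞. Then V = Σ_{k=1}^L Δ̄_k/g(k) is square integrable and E[V²] = Σ_{k=1}^∞ E[Δ̄_k²]/g(k) + 2 Σ_{1≤j<k} E[Δ̄_j] E[Δ̄_k] / g(j); in particular V has finite variance. -/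

import Mathlib

open MeasureTheory ProbabilityTheory
open scoped NNReal ENNReal

noncomputable section

/-- **second moment of the randomized MLMC estimator.** If `(Δ̄_k)_{k≥1}` are
mutually independent and square integrable, `L` is independent of the sequence with
`P(L ≥ k) = g(k) ∈ (0,1]`, `∑_k E[Δ̄_k²]/g(k) < ∞` and
`∑_{1≤j<k} |E[Δ̄_j]||E[Δ̄_k]|/g(j) < ∞`, then `V = ∑_{k=1}^L Δ̄_k/g(k)` is square integrable,
`E[V²] = ∑_{k≥1} E[Δ̄_k²]/g(k) + 2 ∑_{1≤j<k} E[Δ̄_j] E[Δ̄_k]/g(j)`, and `V` has finite variance.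
(Pairs `1 ≤ j < k` are encoded by `(m, n) : ℕ × ℕ ↦ (j, k) = (m + 1, m + n + 2)`.) -/
theorem rmlmc_second_moment
    {Ω : Type*} [MeasurableSpace Ω] (P : Measure Ω) [IsProbabilityMeasure P]
    (D : ℕ → Ω → ℝ) (hDmeas : ∀ k, Measurable (D k))
    (hDsq : ∀ k, MemLp (D k) 2 P)
    (hDindep : iIndepFun D P)
    (g : ℕ → ℝ) (hg : ∀ k : ℕ, 1 ≤ k → 0 < g k ∧ g k ≤ 1)
    (L : Ω → ℕ) (hLmeas : Measurable L) (hLpos : ∀ ω, 1 ≤ L ω)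
    (hLtail : ∀ k : ℕ, 1 ≤ k → P {ω | k ≤ L ω} = ENNReal.ofReal (g k))
    (hLindep : IndepFun L (fun ω => fun k => D k ω) P)
    (hsum1 : Summable (fun k : ℕ => (∫ ω, (D (k + 1) ω) ^ 2 ∂P) / g (k + 1)))
    (hsum2 : Summable (fun q : ℕ × ℕ =>
      |∫ ω, D (q.1 + 1) ω ∂P| * |∫ ω, D (q.1 + q.2 + 2) ω ∂P| / g (q.1 + 1)))
    (V : Ω → ℝ) (hV : ∀ ω, V ω = ∑ k ∈ Finset.Icc 1 (L ω), D k ω / g k) :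
    MemLp V 2 P ∧
    (∫ ω, (V ω) ^ 2 ∂P
      = (∑' k : ℕ, (∫ ω, (D (k + 1) ω) ^ 2 ∂P) / g (k + 1))
        + 2 * ∑' q : ℕ × ℕ,
            (∫ ω, D (q.1 + 1) ω ∂P) * (∫ ω, D (q.1 + q.2 + 2) ω ∂P) / g (q.1 + 1)) ∧
    evariance V P < ⊤ := by
  classical
  have hgpos : ∀ k : ℕ, 0 < g (k + 1) := fun k => (hg (k + 1) (by omega)).1
  have hDint : ∀ k, Integrable (D k) P := fun k => (hDsq k).integrable one_le_two
  have hint : ∀ j k : ℕ, Integrable (fun ω => D j ω * D k ω) P := by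
    intro j k
    rcases eq_or_ne j k with rfl | hjk
    · simpa [pow_two] using (hDsq j).integrable_sq
    · exact (hDindep.indepFun hjk).integrable_mul (hDint j) (hDint k)
  have hmul : ∀ j k : ℕ, j ≠ k →
      ∫ ω, D j ω * D k ω ∂P = (∫ ω, D j ω ∂P) * (∫ ω, D k ω ∂P) := by
    intro j k hjk
    exact (hDindep.indepFun hjk).integral_mul_eq_mul_integral (hDmeas j).aestronglyMeasurable
      (hDmeas k).aestronglyMeasurable
  -- partial sums
  set S : ℕ → Ω → ℝ := fun n ω => ∑ i ∈ Finset.range n, D (i + 1) ω / g (i + 1) with hSdef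
  have hVS : ∀ ω, V ω = S (L ω) ω := by
    intro ω
    rw [hV, hSdef]
    rw [show Finset.Icc 1 (L ω) = Finset.Ico 1 (L ω + 1) by rw [Finset.Ico_add_one_right_eq_Icc]]
    rw [Finset.sum_Ico_eq_sum_range]
    simp [add_comm]
  have hSmeas : ∀ n, Measurable (S n) := by
    intro n
    rw [hSdef]
    exact Finset.measurable_sum _ fun i _ => (hDmeas (i + 1)).div_const _
  have hVmeas : Measurable V := by
    have h0 : Measurable (fun x : Ω × ℕ => S x.2 x.1) :=
      measurable_from_prod_countable_left
        (fun n => (hSmeas n : Measurable fun ω => S n ω))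
    have h1 : Measurable ((fun x : Ω × ℕ => S x.2 x.1) ∘ fun ω => (ω, L ω)) :=
      h0.comp (measurable_id.prodMk hLmeas)
    have h2 : V = (fun x : Ω × ℕ => S x.2 x.1) ∘ fun ω => (ω, L ω) := funext fun ω => hVS ω
    rw [h2]; exact h1
  have hSmem : ∀ n, MemLp (S n) 2 P := by
    intro n
    rw [hSdef]
    apply memLp_finset_sum
    intro i _
    have := (hDsq (i + 1)).const_mul (g (i + 1))⁻¹
    simpa [div_eq_inv_mul] using this
  have hSint2 : ∀ n, Integrable (fun ω => S n ω ^ 2) P := fun n => (hSmem n).integrable_sq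
  -- correlation coefficients
  set c : ℕ → ℕ → ℝ := fun j k => (∫ ω, D j ω * D k ω ∂P) / (g j * g k) with hcdef
  have hES : ∀ n, ∫ ω, S n ω ^ 2 ∂P
      = ∑ x ∈ Finset.range n ×ˢ Finset.range n, c (x.1 + 1) (x.2 + 1) := by
    intro n
    have hpt : ∀ ω, S n ω ^ 2 = ∑ x ∈ Finset.range n ×ˢ Finset.range n,
        (D (x.1 + 1) ω * D (x.2 + 1) ω) / (g (x.1 + 1) * g (x.2 + 1)) := by
      intro ω
      rw [hSdef]
      simp only [pow_two, Finset.sum_mul_sum, Finset.sum_product]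
      exact Finset.sum_congr rfl fun i _ => Finset.sum_congr rfl fun j _ =>
        div_mul_div_comm _ _ _ _
    calc ∫ ω, S n ω ^ 2 ∂P
        = ∫ ω, ∑ x ∈ Finset.range n ×ˢ Finset.range n,
            (D (x.1 + 1) ω * D (x.2 + 1) ω) / (g (x.1 + 1) * g (x.2 + 1)) ∂P :=
          integral_congr_ae (Filter.Eventually.of_forall hpt)
      _ = ∑ x ∈ Finset.range n ×ˢ Finset.range n,
            ∫ ω, (D (x.1 + 1) ω * D (x.2 + 1) ω) / (g (x.1 + 1) * g (x.2 + 1)) ∂P :=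
          integral_finset_sum _ fun x _ => (hint _ _).div_const _
      _ = ∑ x ∈ Finset.range n ×ˢ Finset.range n, c (x.1 + 1) (x.2 + 1) := by
          refine Finset.sum_congr rfl fun x _ => ?_
          rw [hcdef]
          exact integral_div _ _
  -- the point masses of L
  set p : ℕ → ℝ := fun n => (P {ω | L ω = n}).toReal with hpdef
  have hpnn : ∀ n, 0 ≤ p n := by
    intro n; rw [hpdef]; exact ENNReal.toReal_nonneg
  have hpE : ∀ n, ENNReal.ofReal (p n) = P {ω | L ω = n} := by
    intro n; rw [hpdef]; exact ENNReal.ofReal_toReal (measure_ne_top _ _)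
  have hLset : ∀ n : ℕ, MeasurableSet {ω | L ω = n} := fun n =>
    hLmeas (measurableSet_singleton n)
  have hLdisj : Pairwise (Function.onFun Disjoint fun n : ℕ => {ω | L ω = n}) := by
    intro a b hab
    refine Set.disjoint_left.mpr ?_
    rintro ω (h1 : L ω = a) (h2 : L ω = b)
    exact hab (h1.symm.trans h2)
  have hptsum_ne_top : (∑' n : ℕ, P {ω | L ω = n}) ≠ ⊤ := by
    rw [← measure_iUnion hLdisj hLset]
    exact measure_ne_top _ _
  have hpsum : Summable p := by
    rw [hpdef]; exact ENNReal.summable_toReal hptsum_ne_top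
  have htailE : ∀ m : ℕ, 1 ≤ m →
      (∑' n : ℕ, if m ≤ n then P {ω | L ω = n} else 0) = ENNReal.ofReal (g m) := by
    intro m hm
    have hunion : {ω | m ≤ L ω} = ⋃ n : ℕ, {ω | L ω = n ∧ m ≤ n} := by
      ext ω
      simp only [Set.mem_setOf_eq, Set.mem_iUnion]
      constructor
      · intro h; exact ⟨L ω, rfl, h⟩
      · rintro ⟨n, rfl, h⟩; exact h
    have hmeas : ∀ n : ℕ, MeasurableSet {ω | L ω = n ∧ m ≤ n} := by
      intro n
      by_cases h : m ≤ n
      · have : {ω | L ω = n ∧ m ≤ n} = {ω | L ω = n} := by ext ω; simp [h]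
        rw [this]; exact hLset n
      · have : {ω | L ω = n ∧ m ≤ n} = ∅ := by ext ω; simp [h]
        rw [this]; exact MeasurableSet.empty
    have hdisj : Pairwise (Function.onFun Disjoint fun n : ℕ => {ω | L ω = n ∧ m ≤ n}) := by
      intro a b hab
      refine Set.disjoint_left.mpr ?_
      rintro ω ⟨h1, -⟩ ⟨h2, -⟩
      exact hab (h1.symm.trans h2)
    have hkey := measure_iUnion (μ := P) hdisj hmeas
    rw [← hunion, hLtail m hm] at hkey
    rw [hkey]
    refine tsum_congr fun n => ?_
    by_cases h : m ≤ n
    · rw [if_pos h]; congr 1; ext ω; simp [h]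
    · rw [if_neg h]
      have : {ω | L ω = n ∧ m ≤ n} = ∅ := by ext ω; simp [h]
      rw [this, measure_empty]
  have htailR : ∀ m : ℕ, 1 ≤ m → (∑' n : ℕ, if m ≤ n then p n else 0) = g m := by
    intro m hm
    have h2 : ((∑' n : ℕ, if m ≤ n then P {ω | L ω = n} else 0)).toReal
        = ∑' n : ℕ, if m ≤ n then p n else 0 := by
      rw [ENNReal.tsum_toReal_eq]
      · refine tsum_congr fun n => ?_
        by_cases h : m ≤ n
        · rw [if_pos h, if_pos h, hpdef]
        · rw [if_neg h, if_neg h, ENNReal.toReal_zero]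
      · intro n
        by_cases h : m ≤ n
        · rw [if_pos h]; exact measure_ne_top _ _
        · rw [if_neg h]; exact ENNReal.zero_ne_top
    rw [htailE m hm] at h2
    rw [← h2, ENNReal.toReal_ofReal (hg m hm).1.le]
  -- the independence step
  have hIndic : ∀ n : ℕ,
      ∫ ω, (if L ω = n then (1:ℝ) else 0) * S n ω ^ 2 ∂P
        = p n * ∫ ω, S n ω ^ 2 ∂P := by
    intro n
    set φ : ℕ → ℝ := fun m => if m = n then (1:ℝ) else 0 with hφ
    set ψ : (ℕ → ℝ) → ℝ := fun h => (∑ i ∈ Finset.range n, h (i + 1) / g (i + 1)) ^ 2 with hψ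
    have hφm : Measurable φ := measurable_from_top
    have hψm : Measurable ψ := by
      rw [hψ]
      exact (Finset.measurable_sum _ fun i _ =>
        (measurable_pi_apply (i + 1)).div_const _).pow_const 2
    have hindp := hLindep.comp hφm hψm
    have hw : Measurable (fun ω => fun k => D k ω) :=
      measurable_pi_lambda _ fun k => hDmeas k
    have hi := hindp.integral_mul_eq_mul_integral ((hφm.comp hLmeas).aestronglyMeasurable)
      ((hψm.comp hw).aestronglyMeasurable)
    have heq : ((φ ∘ L) * (ψ ∘ fun ω => fun k => D k ω))
        = fun ω => (if L ω = n then (1:ℝ) else 0) * S n ω ^ 2 := by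
      funext ω
      simp only [Pi.mul_apply, Function.comp_apply, hφ, hψ, hSdef]
    have hφint : ∫ ω, φ (L ω) ∂P = p n := by
      have h3 : (fun ω => φ (L ω)) = Set.indicator {ω | L ω = n} (fun _ => (1:ℝ)) := by
        funext ω
        by_cases h : L ω = n
        · simp [hφ, h, Set.indicator_apply]
        · simp [hφ, h, Set.indicator_apply]
      rw [h3, integral_indicator_const _ (hLset n)]
      rw [hpdef]; simp; rfl
    have hψint : ∫ ω, ψ (fun k => D k ω) ∂P = ∫ ω, S n ω ^ 2 ∂P := by
      refine integral_congr_ae (Filter.Eventually.of_forall fun ω => ?_)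
      simp only [hψ, hSdef]
    calc ∫ ω, (if L ω = n then (1:ℝ) else 0) * S n ω ^ 2 ∂P
        = ∫ ω, ((φ ∘ L) * (ψ ∘ fun ω => fun k => D k ω)) ω ∂P := by rw [heq]
      _ = (∫ ω, φ (L ω) ∂P) * ∫ ω, ψ (fun k => D k ω) ∂P := hi
      _ = p n * ∫ ω, S n ω ^ 2 ∂P := by rw [hφint, hψint]
  -- the summand family
  set T : ℕ × ℕ × ℕ → ℝ := fun x =>
    if max x.2.1 x.2.2 + 1 ≤ x.1 then p x.1 * c (x.2.1 + 1) (x.2.2 + 1) else 0 with hTdef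
  set u : ℕ × ℕ → ℝ := fun q => c (q.1 + 1) (q.2 + 1) * g (max q.1 q.2 + 1) with hudef
  have hTfiber : ∀ n, ∑' q : ℕ × ℕ, T (n, q) = p n * ∫ ω, S n ω ^ 2 ∂P := by
    intro n
    have h0 : ∀ q : ℕ × ℕ, q ∉ Finset.range n ×ˢ Finset.range n → T (n, q) = 0 := by
      intro q hq
      simp only [Finset.mem_product, Finset.mem_range, not_and_or, not_lt] at hq
      rw [hTdef]
      dsimp only
      exact if_neg (by omega)
    rw [tsum_eq_sum h0, hES n, Finset.mul_sum]
    refine Finset.sum_congr rfl fun x hx => ?_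
    simp only [Finset.mem_product, Finset.mem_range] at hx
    rw [hTdef]
    dsimp only
    exact if_pos (by omega)
  have hinner : ∀ q : ℕ × ℕ, ∑' n : ℕ, T (n, q) = u q := by
    intro q
    have h1 : (fun n => T (n, q))
        = fun n => c (q.1 + 1) (q.2 + 1) * (if max q.1 q.2 + 1 ≤ n then p n else 0) := by
      funext n
      rw [hTdef]
      dsimp only
      by_cases h : max q.1 q.2 + 1 ≤ n
      · rw [if_pos h, if_pos h]; ring
      · rw [if_neg h, if_neg h]; ring
    rw [h1, tsum_mul_left, htailR _ (by omega), hudef]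
  have hinnerE : ∀ q : ℕ × ℕ, ∑' n : ℕ, ENNReal.ofReal |T (n, q)| = ENNReal.ofReal |u q| := by
    intro q
    have h1 : (fun n => ENNReal.ofReal |T (n, q)|)
        = fun n => ENNReal.ofReal |c (q.1 + 1) (q.2 + 1)|
            * (if max q.1 q.2 + 1 ≤ n then P {ω | L ω = n} else 0) := by
      funext n
      rw [hTdef]
      dsimp only
      by_cases h : max q.1 q.2 + 1 ≤ n
      · rw [if_pos h, if_pos h, abs_mul, abs_of_nonneg (hpnn n), mul_comm,
          ENNReal.ofReal_mul (abs_nonneg _), hpE]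
      · rw [if_neg h, if_neg h, abs_zero, ENNReal.ofReal_zero, mul_zero]
    rw [h1, ENNReal.tsum_mul_left, htailE _ (by omega),
      ← ENNReal.ofReal_mul (abs_nonneg _)]
    congr 1
    rw [hudef]
    rw [abs_mul, abs_of_nonneg (hg _ (by omega)).1.le]
  have hTEprod : ∑' x : ℕ × ℕ × ℕ, ENNReal.ofReal |T x|
      = ∑' q : ℕ × ℕ, ENNReal.ofReal |u q| := by
    rw [ENNReal.tsum_prod']
    rw [ENNReal.tsum_comm]
    exact tsum_congr fun q => hinnerE q
  -- values of u on the diagonal and off-diagonal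
  have hud : ∀ k : ℕ, u (k, k) = (∫ ω, D (k + 1) ω ^ 2 ∂P) / g (k + 1) := by
    intro k
    rw [hudef, hcdef]
    dsimp only
    rw [max_self]
    rw [show (∫ ω, D (k + 1) ω * D (k + 1) ω ∂P) = ∫ ω, D (k + 1) ω ^ 2 ∂P from
      integral_congr_ae (Filter.Eventually.of_forall fun ω => (pow_two _).symm)]
    have hne := (hgpos k).ne'
    field_simp
  have hul : ∀ m n : ℕ, u (m, m + n + 1)
      = (∫ ω, D (m + 1) ω ∂P) * (∫ ω, D (m + n + 2) ω ∂P) / g (m + 1) := by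
    intro m n
    rw [hudef, hcdef]
    dsimp only
    rw [max_eq_right (by omega : m ≤ m + n + 1)]
    rw [show m + n + 1 + 1 = m + n + 2 from rfl]
    rw [hmul (m + 1) (m + n + 2) (by omega)]
    have h1 := (hgpos m).ne'
    have h2 := (hgpos (m + n + 1)).ne'
    field_simp
  have hug : ∀ m n : ℕ, u (m + n + 1, m)
      = (∫ ω, D (m + 1) ω ∂P) * (∫ ω, D (m + n + 2) ω ∂P) / g (m + 1) := by
    intro m n
    rw [hudef, hcdef]
    dsimp only
    rw [max_eq_left (by omega : m ≤ m + n + 1)]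
    rw [show m + n + 1 + 1 = m + n + 2 from rfl]
    rw [show (∫ ω, D (m + n + 2) ω * D (m + 1) ω ∂P)
        = ∫ ω, D (m + 1) ω * D (m + n + 2) ω ∂P from
      integral_congr_ae (Filter.Eventually.of_forall fun ω => mul_comm _ _)]
    rw [hmul (m + 1) (m + n + 2) (by omega)]
    have h1 := (hgpos m).ne'
    have h2 := (hgpos (m + n + 1)).ne'
    field_simp
  -- summability of the three pieces (in composed coordinates)
  have hsl : Summable (fun q : ℕ × ℕ => u (q.1, q.1 + q.2 + 1)) := by
    refine Summable.of_norm_bounded hsum2 fun q => ?_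
    rw [hul q.1 q.2, Real.norm_eq_abs, abs_div, abs_mul,
      abs_of_nonneg (hgpos q.1).le]
  have hsd : Summable (fun k : ℕ => u (k, k)) := by
    have : (fun k : ℕ => u (k, k)) = fun k => (∫ ω, D (k + 1) ω ^ 2 ∂P) / g (k + 1) :=
      funext hud
    rw [this]; exact hsum1
  have hsdnn : ∀ k : ℕ, 0 ≤ u (k, k) := by
    intro k
    rw [hud k]
    exact div_nonneg (integral_nonneg fun ω => sq_nonneg _) (hgpos k).le
  -- the injections
  have hidiag : Function.Injective (fun k : ℕ => ((k, k) : ℕ × ℕ)) := by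
    intro a b h
    exact (Prod.ext_iff.mp h).1
  have hilt : Function.Injective (fun q : ℕ × ℕ => ((q.1, q.1 + q.2 + 1) : ℕ × ℕ)) := by
    intro a b h
    obtain ⟨h1, h2⟩ := Prod.ext_iff.mp h
    dsimp only at h1 h2
    exact Prod.ext h1 (by omega)
  have higt : Function.Injective (fun q : ℕ × ℕ => ((q.1 + q.2 + 1, q.1) : ℕ × ℕ)) := by
    intro a b h
    obtain ⟨h1, h2⟩ := Prod.ext_iff.mp h
    dsimp only at h1 h2
    exact Prod.ext h2 (by omega)
  have hrdiag : ∀ x : ℕ × ℕ, x ∈ Set.range (fun k : ℕ => ((k, k) : ℕ × ℕ)) ↔ x.1 = x.2 := by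
    intro x
    constructor
    · rintro ⟨k, rfl⟩; rfl
    · intro h; exact ⟨x.1, Prod.ext rfl h⟩
  have hrlt : ∀ x : ℕ × ℕ,
      x ∈ Set.range (fun q : ℕ × ℕ => ((q.1, q.1 + q.2 + 1) : ℕ × ℕ)) ↔ x.1 < x.2 := by
    intro x
    constructor
    · rintro ⟨q, rfl⟩; dsimp only; omega
    · intro h; exact ⟨(x.1, x.2 - x.1 - 1), Prod.ext rfl (by dsimp only; omega)⟩
  have hrgt : ∀ x : ℕ × ℕ,
      x ∈ Set.range (fun q : ℕ × ℕ => ((q.1 + q.2 + 1, q.1) : ℕ × ℕ)) ↔ x.2 < x.1 := by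
    intro x
    constructor
    · rintro ⟨q, rfl⟩; dsimp only; omega
    · intro h; exact ⟨(x.2, x.1 - x.2 - 1), Prod.ext (by dsimp only; omega) rfl⟩
  -- the three pieces of u
  set fd : ℕ × ℕ → ℝ := fun q => if q.1 = q.2 then u q else 0 with hfddef
  set fl : ℕ × ℕ → ℝ := fun q => if q.1 < q.2 then u q else 0 with hfldef
  set fgt : ℕ × ℕ → ℝ := fun q => if q.2 < q.1 then u q else 0 with hfgdef
  have hfd_comp : (fun k : ℕ => fd ((k, k) : ℕ × ℕ)) = fun k => u (k, k) := by
    funext k; rw [hfddef]; exact if_pos rfl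
  have hfl_comp : (fun q : ℕ × ℕ => fl ((q.1, q.1 + q.2 + 1) : ℕ × ℕ))
      = fun q : ℕ × ℕ => u (q.1, q.1 + q.2 + 1) := by
    funext q; rw [hfldef]; exact if_pos (by omega)
  have hfg_comp : (fun q : ℕ × ℕ => fgt ((q.1 + q.2 + 1, q.1) : ℕ × ℕ))
      = fun q : ℕ × ℕ => u (q.1 + q.2 + 1, q.1) := by
    funext q; rw [hfgdef]; exact if_pos (by omega)
  have hsg : Summable (fun q : ℕ × ℕ => u (q.1 + q.2 + 1, q.1)) := by
    refine Summable.of_norm_bounded hsum2 fun q => ?_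
    rw [hug q.1 q.2, Real.norm_eq_abs, abs_div, abs_mul,
      abs_of_nonneg (hgpos q.1).le]
  -- vanishing off the ranges
  have hfd_van : ∀ x : ℕ × ℕ, x ∉ Set.range (fun k : ℕ => ((k, k) : ℕ × ℕ)) → fd x = 0 := by
    intro x hx
    rw [hfddef]
    exact if_neg (fun h => hx ((hrdiag x).mpr h))
  have hfl_van : ∀ x : ℕ × ℕ,
      x ∉ Set.range (fun q : ℕ × ℕ => ((q.1, q.1 + q.2 + 1) : ℕ × ℕ)) → fl x = 0 := by
    intro x hx
    rw [hfldef]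
    exact if_neg (fun h => hx ((hrlt x).mpr h))
  have hfg_van : ∀ x : ℕ × ℕ,
      x ∉ Set.range (fun q : ℕ × ℕ => ((q.1 + q.2 + 1, q.1) : ℕ × ℕ)) → fgt x = 0 := by
    intro x hx
    rw [hfgdef]
    exact if_neg (fun h => hx ((hrgt x).mpr h))
  -- summability of the pieces
  have hfd_sum : Summable fd :=
    (Function.Injective.summable_iff hidiag hfd_van).mp (by rw [show (fd ∘ fun k : ℕ => ((k, k) : ℕ × ℕ)) = fun k : ℕ => fd ((k, k) : ℕ × ℕ) from rfl, hfd_comp]; exact hsd)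
  have hfl_sum : Summable fl :=
    (Function.Injective.summable_iff hilt hfl_van).mp (by rw [show (fl ∘ fun q : ℕ × ℕ => ((q.1, q.1 + q.2 + 1) : ℕ × ℕ)) = fun q : ℕ × ℕ => fl ((q.1, q.1 + q.2 + 1) : ℕ × ℕ) from rfl, hfl_comp]; exact hsl)
  have hfg_sum : Summable fgt :=
    (Function.Injective.summable_iff higt hfg_van).mp (by rw [show (fgt ∘ fun q : ℕ × ℕ => ((q.1 + q.2 + 1, q.1) : ℕ × ℕ)) = fun q : ℕ × ℕ => fgt ((q.1 + q.2 + 1, q.1) : ℕ × ℕ) from rfl, hfg_comp]; exact hsg)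
  -- pointwise decomposition
  have hdecomp : ∀ q : ℕ × ℕ, u q = fd q + fl q + fgt q := by
    intro q
    rw [hfddef, hfldef, hfgdef]
    dsimp only
    rcases lt_trichotomy q.1 q.2 with h | h | h
    · rw [if_neg (by omega), if_pos h, if_neg (by omega)]; ring
    · rw [if_pos h, if_neg (by omega), if_neg (by omega)]; ring
    · rw [if_neg (by omega), if_neg (by omega), if_pos h]; ring
  -- the tsum values of the pieces
  have htd : ∑' q : ℕ × ℕ, fd q = ∑' k : ℕ, (∫ ω, D (k + 1) ω ^ 2 ∂P) / g (k + 1) := by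
    rw [← Function.Injective.tsum_eq hidiag
      (Function.support_subset_iff'.mpr hfd_van)]
    rw [show (fun k : ℕ => fd ((k, k) : ℕ × ℕ)) = fun k : ℕ => u (k, k) from hfd_comp]
    exact tsum_congr hud
  have htl : ∑' q : ℕ × ℕ, fl q
      = ∑' q : ℕ × ℕ, (∫ ω, D (q.1 + 1) ω ∂P) * (∫ ω, D (q.1 + q.2 + 2) ω ∂P) / g (q.1 + 1) := by
    rw [← Function.Injective.tsum_eq hilt
      (Function.support_subset_iff'.mpr hfl_van)]
    rw [show (fun q : ℕ × ℕ => fl ((q.1, q.1 + q.2 + 1) : ℕ × ℕ))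
      = fun q : ℕ × ℕ => u (q.1, q.1 + q.2 + 1) from hfl_comp]
    exact tsum_congr fun q => hul q.1 q.2
  have htg : ∑' q : ℕ × ℕ, fgt q
      = ∑' q : ℕ × ℕ, (∫ ω, D (q.1 + 1) ω ∂P) * (∫ ω, D (q.1 + q.2 + 2) ω ∂P) / g (q.1 + 1) := by
    rw [← Function.Injective.tsum_eq higt
      (Function.support_subset_iff'.mpr hfg_van)]
    rw [show (fun q : ℕ × ℕ => fgt ((q.1 + q.2 + 1, q.1) : ℕ × ℕ))
      = fun q : ℕ × ℕ => u (q.1 + q.2 + 1, q.1) from hfg_comp]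
    exact tsum_congr fun q => hug q.1 q.2
  have husum : ∑' q : ℕ × ℕ, u q
      = (∑' k : ℕ, (∫ ω, D (k + 1) ω ^ 2 ∂P) / g (k + 1))
        + 2 * ∑' q : ℕ × ℕ,
            (∫ ω, D (q.1 + 1) ω ∂P) * (∫ ω, D (q.1 + q.2 + 2) ω ∂P) / g (q.1 + 1) := by
    calc ∑' q : ℕ × ℕ, u q = ∑' q : ℕ × ℕ, (fd q + fl q + fgt q) := tsum_congr hdecomp
      _ = (∑' q : ℕ × ℕ, (fd q + fl q)) + ∑' q : ℕ × ℕ, fgt q :=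
          Summable.tsum_add (hfd_sum.add hfl_sum) hfg_sum
      _ = ((∑' q : ℕ × ℕ, fd q) + ∑' q : ℕ × ℕ, fl q) + ∑' q : ℕ × ℕ, fgt q := by
          rw [Summable.tsum_add hfd_sum hfl_sum]
      _ = _ := by rw [htd, htl, htg]; ring
  -- ENNReal finiteness of the |u| sum
  have hufinE : ∑' q : ℕ × ℕ, ENNReal.ofReal |u q| ≠ ⊤ := by
    have hdecompE : ∀ q : ℕ × ℕ, ENNReal.ofReal |u q|
        = ENNReal.ofReal |fd q| + ENNReal.ofReal |fl q| + ENNReal.ofReal |fgt q| := by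
      intro q
      rw [hfddef, hfldef, hfgdef]
      dsimp only
      rcases lt_trichotomy q.1 q.2 with h | h | h
      · rw [if_neg (by omega), if_pos h, if_neg (by omega)]; simp
      · rw [if_pos h, if_neg (by omega), if_neg (by omega)]; simp
      · rw [if_neg (by omega), if_neg (by omega), if_pos h]; simp
    have e1 : ∑' q : ℕ × ℕ, ENNReal.ofReal |fd q|
        = ENNReal.ofReal (∑' k : ℕ, |u (k, k)|) := by
      rw [ENNReal.ofReal_tsum_of_nonneg (fun k => abs_nonneg _) hsd.abs]
      rw [← Function.Injective.tsum_eq hidiag (f := fun x => ENNReal.ofReal |fd x|)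
        (Function.support_subset_iff'.mpr (fun x hx => by rw [hfd_van x hx]; simp))]
      refine tsum_congr fun k => ?_
      rw [show fd ((k, k) : ℕ × ℕ) = u (k, k) from congrFun hfd_comp k]
    have e2 : ∑' q : ℕ × ℕ, ENNReal.ofReal |fl q|
        = ENNReal.ofReal (∑' q : ℕ × ℕ, |u (q.1, q.1 + q.2 + 1)|) := by
      rw [ENNReal.ofReal_tsum_of_nonneg (fun q => abs_nonneg _) hsl.abs]
      rw [← Function.Injective.tsum_eq hilt (f := fun x => ENNReal.ofReal |fl x|)
        (Function.support_subset_iff'.mpr (fun x hx => by rw [hfl_van x hx]; simp))]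
      refine tsum_congr fun q => ?_
      rw [show fl ((q.1, q.1 + q.2 + 1) : ℕ × ℕ) = u (q.1, q.1 + q.2 + 1) from
        congrFun hfl_comp q]
    have e3 : ∑' q : ℕ × ℕ, ENNReal.ofReal |fgt q|
        = ENNReal.ofReal (∑' q : ℕ × ℕ, |u (q.1 + q.2 + 1, q.1)|) := by
      rw [ENNReal.ofReal_tsum_of_nonneg (fun q => abs_nonneg _) hsg.abs]
      rw [← Function.Injective.tsum_eq higt (f := fun x => ENNReal.ofReal |fgt x|)
        (Function.support_subset_iff'.mpr (fun x hx => by rw [hfg_van x hx]; simp))]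
      refine tsum_congr fun q => ?_
      rw [show fgt ((q.1 + q.2 + 1, q.1) : ℕ × ℕ) = u (q.1 + q.2 + 1, q.1) from
        congrFun hfg_comp q]
    rw [tsum_congr hdecompE, ENNReal.tsum_add, ENNReal.tsum_add, e1, e2, e3]
    exact ENNReal.add_ne_top.mpr
      ⟨ENNReal.add_ne_top.mpr ⟨ENNReal.ofReal_ne_top, ENNReal.ofReal_ne_top⟩,
        ENNReal.ofReal_ne_top⟩
  have hTEfin : ∑' x : ℕ × ℕ × ℕ, ENNReal.ofReal |T x| ≠ ⊤ := by
    rw [hTEprod]; exact hufinE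
  -- summability of T
  have hTsum : Summable T := by
    apply Summable.of_abs
    refine (ENNReal.summable_toReal hTEfin).congr fun x => ?_
    exact ENNReal.toReal_ofReal (abs_nonneg _)
  have hTsum1 : ∀ n, Summable fun q : ℕ × ℕ => T (n, q) := by
    intro n
    refine summable_of_ne_finset_zero (s := Finset.range n ×ˢ Finset.range n) ?_
    intro q hq
    simp only [Finset.mem_product, Finset.mem_range, not_and_or, not_lt] at hq
    rw [hTdef]
    dsimp only
    exact if_neg (by omega)
  have hTsum2 : ∀ q : ℕ × ℕ, Summable fun n : ℕ => T (n, q) := by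
    intro q
    refine Summable.of_norm_bounded (g := fun n => |c (q.1 + 1) (q.2 + 1)| * p n)
      (hpsum.mul_left _) fun n => ?_
    rw [hTdef]
    dsimp only
    by_cases h : max q.1 q.2 + 1 ≤ n
    · rw [if_pos h, Real.norm_eq_abs, abs_mul, abs_of_nonneg (hpnn n)]
      rw [mul_comm]
    · rw [if_neg h, norm_zero]
      exact mul_nonneg (abs_nonneg _) (hpnn n)
  -- the exchange of sums
  have hchain : ∑' n : ℕ, (p n * ∫ ω, S n ω ^ 2 ∂P) = ∑' q : ℕ × ℕ, u q := by
    calc ∑' n : ℕ, (p n * ∫ ω, S n ω ^ 2 ∂P)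
        = ∑' n : ℕ, ∑' q : ℕ × ℕ, T (n, q) := tsum_congr fun n => (hTfiber n).symm
      _ = ∑' q : ℕ × ℕ, ∑' n : ℕ, T (n, q) := by
          have hTsum' : Summable (Function.uncurry fun n (q : ℕ × ℕ) => T (n, q)) :=
            hTsum.congr fun x => rfl
          exact (Summable.tsum_comm' (f := fun n (q : ℕ × ℕ) => T (n, q)) hTsum' hTsum1 hTsum2).symm
      _ = ∑' q : ℕ × ℕ, u q := tsum_congr hinner
  -- the indicator decomposition of V²
  set F : ℕ → Ω → ℝ := fun n ω => (if L ω = n then (1:ℝ) else 0) * S n ω ^ 2 with hFdef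
  have hFnn : ∀ n ω, 0 ≤ F n ω := by
    intro n ω
    rw [hFdef]
    dsimp only
    by_cases h : L ω = n
    · rw [if_pos h, one_mul]; exact sq_nonneg _
    · rw [if_neg h, zero_mul]
  have hFmeas : ∀ n, Measurable (F n) := by
    intro n
    rw [hFdef]
    exact (((measurable_from_top
        (f := fun m : ℕ => if m = n then (1:ℝ) else 0)).comp hLmeas)).mul
      ((hSmeas n).pow_const 2)
  have hFint : ∀ n, Integrable (F n) P := by
    intro n
    have h3 : F n = Set.indicator {ω | L ω = n} (fun ω => S n ω ^ 2) := by
      funext ω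
      by_cases h : L ω = n <;>
        simp [hFdef, Set.indicator_apply, Set.mem_setOf_eq, h]
    rw [h3]
    exact (hSint2 n).indicator (hLset n)
  have hFintegral : ∀ n, ∫ ω, F n ω ∂P = p n * ∫ ω, S n ω ^ 2 ∂P := by
    intro n
    calc ∫ ω, F n ω ∂P = ∫ ω, (if L ω = n then (1:ℝ) else 0) * S n ω ^ 2 ∂P := by rw [hFdef]
      _ = p n * ∫ ω, S n ω ^ 2 ∂P := hIndic n
  have hlintF : ∀ n, ∫⁻ ω, ENNReal.ofReal (F n ω) ∂P
      = ENNReal.ofReal (p n * ∫ ω, S n ω ^ 2 ∂P) := by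
    intro n
    rw [← ofReal_integral_eq_lintegral_ofReal (hFint n)
      (Filter.Eventually.of_forall (hFnn n)), hFintegral n]
  have hboundn : ∀ n, ENNReal.ofReal (p n * ∫ ω, S n ω ^ 2 ∂P)
      ≤ ∑' q : ℕ × ℕ, ENNReal.ofReal |T (n, q)| := by
    intro n
    rw [← hTfiber n]
    calc ENNReal.ofReal (∑' q : ℕ × ℕ, T (n, q))
        ≤ ENNReal.ofReal (∑' q : ℕ × ℕ, |T (n, q)|) :=
          ENNReal.ofReal_le_ofReal
            (Summable.tsum_le_tsum (fun q => le_abs_self _) (hTsum1 n) (hTsum1 n).abs)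
      _ = ∑' q : ℕ × ℕ, ENNReal.ofReal |T (n, q)| :=
          ENNReal.ofReal_tsum_of_nonneg (fun q => abs_nonneg _) (hTsum1 n).abs
  have hlim : ∑' n : ℕ, ∫⁻ ω, ENNReal.ofReal (F n ω) ∂P ≠ ⊤ := by
    refine ne_top_of_le_ne_top hTEfin ?_
    calc ∑' n : ℕ, ∫⁻ ω, ENNReal.ofReal (F n ω) ∂P
        = ∑' n : ℕ, ENNReal.ofReal (p n * ∫ ω, S n ω ^ 2 ∂P) := tsum_congr hlintF
      _ ≤ ∑' n : ℕ, ∑' q : ℕ × ℕ, ENNReal.ofReal |T (n, q)| :=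
          ENNReal.tsum_le_tsum hboundn
      _ = ∑' x : ℕ × ℕ × ℕ, ENNReal.ofReal |T x| :=
          (ENNReal.tsum_prod' (f := fun x : ℕ × ℕ × ℕ => ENNReal.ofReal |T x|)).symm
  have hVtsum : ∀ ω, V ω ^ 2 = ∑' n : ℕ, F n ω := by
    intro ω
    rw [tsum_eq_single (L ω) ?side]
    case side =>
      intro b hb
      rw [hFdef]
      dsimp only
      rw [if_neg (fun h => hb h.symm), zero_mul]
    rw [hFdef]
    dsimp only
    rw [if_pos rfl, one_mul, hVS ω]
  have hnormF : ∀ n ω, (‖F n ω‖₊ : ℝ≥0∞) = ENNReal.ofReal (F n ω) := fun n ω =>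
    Real.enorm_eq_ofReal (hFnn n ω)
  have hIntV2 : Integrable (fun ω => V ω ^ 2) P := by
    refine ⟨(hVmeas.pow_const 2).aestronglyMeasurable, ?_⟩
    rw [hasFiniteIntegral_iff_ofReal (Filter.Eventually.of_forall fun ω => sq_nonneg _)]
    have hpt : ∀ ω, ENNReal.ofReal (V ω ^ 2) = ∑' n : ℕ, ENNReal.ofReal (F n ω) := by
      intro ω
      rw [tsum_eq_single (L ω) ?side2]
      case side2 =>
        intro b hb
        rw [hFdef]
        dsimp only
        rw [if_neg (fun h => hb h.symm), zero_mul, ENNReal.ofReal_zero]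
      congr 1
      rw [hFdef]
      dsimp only
      rw [if_pos rfl, one_mul, hVS ω]
    calc ∫⁻ ω, ENNReal.ofReal (V ω ^ 2) ∂P
        = ∫⁻ ω, ∑' n : ℕ, ENNReal.ofReal (F n ω) ∂P := lintegral_congr hpt
      _ = ∑' n : ℕ, ∫⁻ ω, ENNReal.ofReal (F n ω) ∂P :=
          lintegral_tsum fun n => ((hFmeas n).ennreal_ofReal).aemeasurable
      _ < ⊤ := lt_top_iff_ne_top.mpr hlim
  have hEV : ∫ ω, V ω ^ 2 ∂P = ∑' n : ℕ, (p n * ∫ ω, S n ω ^ 2 ∂P) := by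
    calc ∫ ω, V ω ^ 2 ∂P = ∫ ω, ∑' n : ℕ, F n ω ∂P :=
          integral_congr_ae (Filter.Eventually.of_forall hVtsum)
      _ = ∑' n : ℕ, ∫ ω, F n ω ∂P := by
          refine integral_tsum (fun n => (hFmeas n).aestronglyMeasurable) ?_
          refine ne_top_of_le_ne_top hlim (le_of_eq ?_)
          refine tsum_congr fun n => ?_
          exact lintegral_congr (hnormF n)
      _ = ∑' n : ℕ, (p n * ∫ ω, S n ω ^ 2 ∂P) := tsum_congr hFintegral
  have hmem : MemLp V 2 P := (memLp_two_iff_integrable_sq hVmeas.aestronglyMeasurable).mpr hIntV2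
  refine ⟨hmem, ?_, hmem.evariance_lt_top⟩
  rw [hEV, hchain, husum]
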